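/- Let i be an irrational real number with 0 < i < 1, let q be a rational number with 19 < q < 20, let M = ([0, 5 + i/2] ∩ ℚ) ∪ (5 + i/2, ∞) regarded as an additive submonoid of the nonnegative reals, and let r be a rational number with 10 < r < 10 + i. Then there do not exist elements α, β, α′, β′ ∈ M satisfying simultaneously α + β = 10 + i, α + α′ = r, and β + β′ = q − r. -/

import Mathlib

/-- The set `M = ([0, 5 + i/2] ∩ ℚ) ∪ (5 + i/2, ∞)` of nonnegative reals. -/
def Mcarrier (i : ℝ) : Set ℝ :=
  (Set.Icc (0 : ℝ) (5 + i / 2) ∩ Set.range ((↑) : ℚ → ℝ)) ∪ Set.Ioi (5 + i / 2)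

/-- Let `i` be an irrational real with `0 < i < 1`, let `q` be rational
with `19 < q < 20`, let `M = ([0, 5 + i/2] ∩ ℚ) ∪ (5 + i/2, ∞)`, and let `r` be rational
with `10 < r < 10 + i`. Then there are no `α, β, α', β' ∈ M` with `α + β = 10 + i`,
`α + α' = r` and `β + β' = q - r`. -/
theorem no_decomposition (i : ℝ) (hi : Irrational i) (hi0 : 0 < i) (hi1 : i < 1)
    (q : ℚ) (hq1 : 19 < (q : ℝ)) (hq2 : (q : ℝ) < 20)
    (r : ℚ) (hr1 : 10 < (r : ℝ)) (hr2 : (r : ℝ) < 10 + i) :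
    ¬∃ α β α' β' : ℝ, α ∈ Mcarrier i ∧ β ∈ Mcarrier i ∧ α' ∈ Mcarrier i ∧ β' ∈ Mcarrier i ∧
      α + β = 10 + i ∧ α + α' = (r : ℝ) ∧ β + β' = (q : ℝ) - (r : ℝ) := by
  rintro ⟨α, β, α', β', hα, hβ, hα', hβ', hsum, hA, hB⟩
  have key : ∀ x ∈ Mcarrier i, Irrational x → 5 + i / 2 < x := by
    rintro x (⟨hx1, s, rfl⟩ | hx) hirr
    · exact absurd hirr (Rat.not_irrational s)
    · exact hx
  have h10i : Irrational (10 + i) := by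
    have := hi.ratCast_add (q := 10)
    simpa using this
  have hcases : Irrational α ∨ Irrational β := by
    rw [← hsum] at h10i
    exact h10i.add_cases
  rcases hcases with hαirr | hβirr
  · have hα2 : 5 + i / 2 < α := key α hα hαirr
    have hα'irr : Irrational α' := by
      intro ⟨s, hs⟩
      exact hαirr ⟨r - s, by push_cast; linarith⟩
    have hα'2 : 5 + i / 2 < α' := key α' hα' hα'irr
    linarith
  · have hβ2 : 5 + i / 2 < β := key β hβ hβirr
    have hβ'irr : Irrational β' := by
      intro ⟨s, hs⟩
      exact hβirr ⟨q - r - s, by push_cast; linarith⟩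
    have hβ'2 : 5 + i / 2 < β' := key β' hβ' hβ'irr
    linarith
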